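/- The number of lattice paths with steps U = (1,1) and D = (1,-1), starting at the origin, of length 2n, that never fall below the x-axis, is binom(2n, n). -/

import Mathlib

open Finset

def cnt {m : ℕ} (b : Fin m → Bool) (k : ℕ) : ℕ :=
  (Finset.univ.filter (fun i : Fin m => (i : ℕ) < k ∧ b i)).card

def S (m j : ℕ) : Finset (Fin m → Bool) :=
  Finset.univ.filter (fun b => (∀ k ≤ m, k ≤ 2 * cnt b k) ∧ cnt b m = j)

def B (m j : ℕ) : ℕ := if m ≤ 2 * j then Nat.choose m j - Nat.choose m (j+1) else 0

lemma choose_succ_le {m j : ℕ} (h : m ≤ 2 * j) : Nat.choose m (j+1) ≤ Nat.choose m j := by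
  rcases lt_or_ge m (j+1) with hm | hm
  · rw [Nat.choose_eq_zero_of_lt hm]; exact Nat.zero_le _
  · rw [← Nat.choose_symm hm, ← Nat.choose_symm (by omega : j ≤ m)]
    have h1 : m - (j+1) < m / 2 := by omega
    have := Nat.choose_le_succ_of_lt_half_left (n := m) h1
    have h2 : m - (j+1) + 1 = m - j := by omega
    rwa [h2] at this

lemma cnt_le {m : ℕ} (b : Fin m → Bool) (k : ℕ) : cnt b k ≤ m := by
  classical
  calc cnt b k ≤ (Finset.univ : Finset (Fin m)).card := Finset.card_filter_le _ _
  _ = m := by simp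

lemma cnt_snoc_le {m : ℕ} (c : Fin m → Bool) (x : Bool) {k : ℕ} (hk : k ≤ m) :
    cnt (Fin.snoc c x) k = cnt c k := by
  classical
  unfold cnt
  rw [Finset.card_filter, Finset.card_filter, Fin.sum_univ_castSucc]
  simp only [Fin.snoc_castSucc, Fin.coe_castSucc, Fin.snoc_last, Fin.val_last]
  rw [if_neg (by omega : ¬ (m < k ∧ x = true)), add_zero]

lemma cnt_snoc_top {m : ℕ} (c : Fin m → Bool) (x : Bool) :
    cnt (Fin.snoc c x) (m+1) = cnt c m + (if x then 1 else 0) := by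
  classical
  unfold cnt
  rw [Finset.card_filter, Finset.card_filter, Fin.sum_univ_castSucc]
  simp only [Fin.snoc_castSucc, Fin.coe_castSucc, Fin.snoc_last, Fin.val_last]
  congr 1
  · apply Finset.sum_congr rfl
    intro i _
    have hi : (i : ℕ) < m := i.isLt
    congr 1
    simp only [eq_iff_iff]
    constructor <;> rintro ⟨h1, h2⟩ <;> exact ⟨by omega, h2⟩
  · rcases x with _ | _ <;> simp

lemma snoc_inj {m : ℕ} (x : Bool) :
    Function.Injective (fun c : Fin m → Bool => (Fin.snoc c x : Fin (m+1) → Bool)) := by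
  intro c c' h
  funext i
  have := congrFun h (Fin.castSucc i)
  simpa [Fin.snoc_castSucc] using this

lemma mem_S {m j : ℕ} (b : Fin m → Bool) :
    b ∈ S m j ↔ (∀ k ≤ m, k ≤ 2 * cnt b k) ∧ cnt b m = j := by
  simp [S]

lemma snoc_cond {m : ℕ} (c : Fin m → Bool) (x : Bool) :
    (∀ k ≤ m+1, k ≤ 2 * cnt (Fin.snoc c x) k) ↔
      (∀ k ≤ m, k ≤ 2 * cnt c k) ∧ (m+1 ≤ 2 * (cnt c m + if x then 1 else 0)) := by
  constructor
  · intro h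
    refine ⟨fun k hk => ?_, ?_⟩
    · have := h k (by omega)
      rwa [cnt_snoc_le c x hk] at this
    · have := h (m+1) le_rfl
      rwa [cnt_snoc_top c x] at this
  · rintro ⟨h1, h2⟩ k hk
    rcases Nat.lt_or_ge k (m+1) with hk' | hk'
    · rw [cnt_snoc_le c x (by omega)]; exact h1 k (by omega)
    · have hk2 : k = m+1 := by omega
      subst hk2
      rwa [cnt_snoc_top c x]

lemma snoc_mem_S_iff {m j : ℕ} (c : Fin m → Bool) (x : Bool) :
    (Fin.snoc c x : Fin (m+1) → Bool) ∈ S (m+1) j ↔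
      (∀ k ≤ m, k ≤ 2 * cnt c k) ∧ (m+1 ≤ 2 * (cnt c m + if x then 1 else 0)) ∧
        cnt c m + (if x then 1 else 0) = j := by
  rw [mem_S, snoc_cond, cnt_snoc_top, and_assoc]

lemma S_succ_eq (m j : ℕ) (hcond : m + 1 ≤ 2 * (j+1)) :
    S (m+1) (j+1) = (S m j).image (fun c => Fin.snoc c true) ∪
      (S m (j+1)).image (fun c => Fin.snoc c false) := by
  classical
  ext b
  rw [← Fin.snoc_init_self b]
  set c := Fin.init b with hc
  set x := b (Fin.last m) with hx
  rw [snoc_mem_S_iff]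
  simp only [Finset.mem_union, Finset.mem_image]
  constructor
  · rintro ⟨h1, h2, h3⟩
    rcases x with _ | _
    · simp only [if_neg Bool.false_ne_true, Bool.false_eq_true, if_false, add_zero] at h2 h3
      right
      exact ⟨c, (mem_S c).2 ⟨h1, h3⟩, rfl⟩
    · simp only [if_pos rfl, if_true] at h2 h3
      left
      exact ⟨c, (mem_S c).2 ⟨h1, by omega⟩, rfl⟩
  · rintro (⟨d, hd, hsnoc⟩ | ⟨d, hd, hsnoc⟩)
    · have hx' : x = true := by
        have := congrFun hsnoc (Fin.last m); simpa using this
      have hcd : d = c := by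
        funext i
        have := congrFun hsnoc (Fin.castSucc i); simpa using this
      rw [mem_S] at hd
      subst hcd
      rw [hx']
      have hm := hd.1 m le_rfl
      simp only [if_true]
      exact ⟨hd.1, by omega, by omega⟩
    · have hx' : x = false := by
        have := congrFun hsnoc (Fin.last m); simpa using this
      have hcd : d = c := by
        funext i
        have := congrFun hsnoc (Fin.castSucc i); simpa using this
      rw [mem_S] at hd
      subst hcd
      rw [hx']
      simp only [Bool.false_eq_true, if_false, add_zero]
      exact ⟨hd.1, by omega, hd.2⟩

lemma S_succ_empty (m j : ℕ) (hcond : ¬ m + 1 ≤ 2 * (j+1)) :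
    S (m+1) (j+1) = (S m j).image (fun c => Fin.snoc c true) := by
  classical
  ext b
  rw [← Fin.snoc_init_self b]
  set c := Fin.init b with hc
  set x := b (Fin.last m) with hx
  rw [snoc_mem_S_iff]
  simp only [Finset.mem_image]
  constructor
  · rintro ⟨h1, h2, h3⟩
    exfalso
    rcases x with _ | _ <;> simp at h2 h3 <;> omega
  · rintro ⟨d, hd, hsnoc⟩
    have hx' : x = true := by
      have := congrFun hsnoc (Fin.last m); simpa using this
    have hcd : d = c := by
      funext i
      have := congrFun hsnoc (Fin.castSucc i); simpa using this
    rw [mem_S] at hd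
    subst hcd
    rw [hx']
    have hm := hd.1 m le_rfl
    simp only [if_true]
    exact ⟨hd.1, by omega, by omega⟩

lemma S_succ_card (m j : ℕ) :
    (S (m+1) (j+1)).card = (S m j).card +
      (if m + 1 ≤ 2 * (j+1) then (S m (j+1)).card else 0) := by
  classical
  by_cases hcond : m + 1 ≤ 2 * (j+1)
  · rw [if_pos hcond, S_succ_eq m j hcond, Finset.card_union_of_disjoint,
      Finset.card_image_of_injective _ (snoc_inj true),
      Finset.card_image_of_injective _ (snoc_inj false)]
    rw [Finset.disjoint_left]
    rintro b hb hb'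
    simp only [Finset.mem_image] at hb hb'
    rcases hb with ⟨d, _, rfl⟩
    rcases hb' with ⟨d', _, h⟩
    have := congrFun h (Fin.last m)
    simp at this
  · rw [if_neg hcond, S_succ_empty m j hcond,
      Finset.card_image_of_injective _ (snoc_inj true), add_zero]

lemma S_zero_card (m : ℕ) : (S (m+1) 0).card = 0 := by
  classical
  rw [Finset.card_eq_zero, Finset.eq_empty_iff_forall_notMem]
  intro b hb
  rw [mem_S] at hb
  have h1 := hb.1 (m+1) le_rfl
  have h2 := hb.2
  omega

lemma B_zero (m : ℕ) : B (m+1) 0 = 0 := by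
  simp [B]

lemma B_succ (m j : ℕ) :
    B (m+1) (j+1) = B m j + (if m + 1 ≤ 2 * (j+1) then B m (j+1) else 0) := by
  by_cases h1 : m + 1 ≤ 2 * (j+1)
  · rw [if_pos h1]
    have hsplit1 : Nat.choose (m+1) (j+1) = Nat.choose m j + Nat.choose m (j+1) :=
      Nat.choose_succ_succ m j
    have hsplit2 : Nat.choose (m+1) (j+2) = Nat.choose m (j+1) + Nat.choose m (j+2) :=
      Nat.choose_succ_succ m (j+1)
    have hcb : Nat.choose m (j+2) ≤ Nat.choose m (j+1) :=
      choose_succ_le (show m ≤ 2 * (j+1) by omega)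
    by_cases h2 : m ≤ 2 * j
    · have hba := choose_succ_le h2
      rw [B, B, B, if_pos (by omega), if_pos h2, if_pos (by omega)]
      show Nat.choose (m+1) (j+1) - Nat.choose (m+1) (j+2) = _
      have e1 : Nat.choose m (j+1+1) = Nat.choose m (j+2) := rfl
      have e2 : Nat.choose (m+1) (j+1+1) = Nat.choose (m+1) (j+2) := rfl
      omega
    · have hm : m = 2 * j + 1 := by omega
      have hab : Nat.choose m j = Nat.choose m (j+1) := by
        subst hm; exact (Nat.choose_symm_half j).symm
      rw [B, B, B, if_pos (by omega), if_neg h2, if_pos (by omega)]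
      show Nat.choose (m+1) (j+1) - Nat.choose (m+1) (j+2) = _
      have e1 : Nat.choose m (j+1+1) = Nat.choose m (j+2) := rfl
      have e2 : Nat.choose (m+1) (j+1+1) = Nat.choose (m+1) (j+2) := rfl
      omega
  · rw [if_neg h1, B, B, if_neg (by omega), if_neg (by omega)]

lemma S_card (m : ℕ) : ∀ j, (S m j).card = B m j := by
  induction m with
  | zero =>
    intro j
    have hcnt : ∀ (b : Fin 0 → Bool) (k : ℕ), cnt b k = 0 := by
      intro b k
      simp [cnt]
    rcases j with _ | j
    · rw [show B 0 0 = 1 by simp [B]]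
      have huniv : S 0 0 = Finset.univ := by
        apply Finset.eq_univ_of_forall
        intro b
        rw [mem_S]
        refine ⟨fun k hk => by omega, hcnt b 0⟩
      rw [huniv, Finset.card_univ]
      simp
    · rw [show B 0 (j+1) = 0 by simp [B]]
      rw [Finset.card_eq_zero, Finset.eq_empty_iff_forall_notMem]
      intro b hb
      rw [mem_S] at hb
      rw [hcnt] at hb
      exact Nat.succ_ne_zero j hb.2.symm
  | succ m ih =>
    intro j
    rcases j with _ | j
    · rw [S_zero_card, B_zero]
    · rw [S_succ_card, B_succ, ih j, ih (j+1)]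

def S' (m : ℕ) : Finset (Fin m → Bool) :=
  Finset.univ.filter (fun b => ∀ k ≤ m, k ≤ 2 * cnt b k)

lemma S'_card (m : ℕ) : (S' m).card = ∑ j ∈ Finset.range (m+1), (S m j).card := by
  classical
  rw [Finset.card_eq_sum_card_fiberwise (f := fun b => cnt b m) (t := Finset.range (m+1))
    (fun b _ => by simpa using Nat.lt_succ_of_le (cnt_le b m))]
  apply Finset.sum_congr rfl
  intro j _
  congr 1
  rw [S', S, Finset.filter_filter]

lemma telescope (g : ℕ → ℕ) (hg : ∀ i, g (i+1) ≤ g i) (t : ℕ) :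
    ∑ i ∈ Finset.range t, (g i - g (i+1)) = g 0 - g t := by
  induction t with
  | zero => simp
  | succ t ih =>
    rw [Finset.sum_range_succ, ih]
    have hmono : Antitone g := antitone_nat_of_succ_le hg
    exact tsub_add_tsub_cancel (hmono (Nat.zero_le t)) (hg t)

lemma sum_B (n : ℕ) : ∑ j ∈ Finset.range (2*n+1), B (2*n) j = Nat.choose (2*n) n := by
  rw [Finset.range_eq_Ico, ← Finset.sum_Ico_consecutive _ (Nat.zero_le n) (by omega : n ≤ 2*n+1)]
  have h0 : ∑ j ∈ Finset.Ico 0 n, B (2*n) j = 0 := by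
    apply Finset.sum_eq_zero
    intro j hj
    rw [Finset.mem_Ico] at hj
    rw [B, if_neg (by omega)]
  rw [h0, zero_add, Finset.sum_Ico_eq_sum_range]
  have hlen : 2*n+1 - n = n+1 := by omega
  rw [hlen]
  have hterm : ∀ i ∈ Finset.range (n+1), B (2*n) (n+i) =
      Nat.choose (2*n) (n+i) - Nat.choose (2*n) (n+(i+1)) := by
    intro i _
    rw [B, if_pos (by omega), ← add_assoc]
  rw [Finset.sum_congr rfl hterm]
  rw [telescope (fun i => Nat.choose (2*n) (n+i)) (fun i => choose_succ_le (Nat.mul_le_mul_left 2 (Nat.le_add_right n i)))]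
  rw [Nat.choose_eq_zero_of_lt (show 2*n < n+(n+1) by omega), Nat.sub_zero, Nat.add_zero]

lemma card_filter_lt (m k : ℕ) (hk : k ≤ m) :
    (Finset.univ.filter (fun i : Fin m => (i : ℕ) < k)).card = k := by
  classical
  have h : (Finset.univ.filter (fun i : Fin m => (i : ℕ) < k)).card = (Finset.range k).card := by
    apply Finset.card_bij (fun (i : Fin m) _ => (i : ℕ))
    · intro a ha
      rw [Finset.mem_filter] at ha
      exact Finset.mem_range.2 ha.2
    · intro a _ b _ h
      exact Fin.val_injective h
    · intro b hb
      rw [Finset.mem_range] at hb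
      refine ⟨⟨b, by omega⟩, ?_, rfl⟩
      simp [hb]
  rw [h, Finset.card_range]

lemma filter_lt_univ (m k : ℕ) (hk : m ≤ k) :
    (Finset.univ.filter (fun i : Fin m => (i : ℕ) < k)) = Finset.univ := by
  apply Finset.filter_true_of_mem
  intro i _
  exact lt_of_lt_of_le i.isLt hk

lemma sum_pm (m : ℕ) (b : Fin m → Bool) (k : ℕ) :
    ∑ i ∈ Finset.univ.filter (fun i : Fin m => (i : ℕ) < k), (if b i then (1:ℤ) else -1) =
      2 * (cnt b k : ℤ) - ((Finset.univ.filter (fun i : Fin m => (i : ℕ) < k)).card : ℤ) := by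
  classical
  set A := Finset.univ.filter (fun i : Fin m => (i : ℕ) < k) with hA
  have hterm : ∀ i ∈ A, (if b i then (1:ℤ) else -1) = 2 * (if b i then (1:ℤ) else 0) - 1 := by
    intro i _
    rcases hb : b i <;> simp
  rw [Finset.sum_congr rfl hterm, Finset.sum_sub_distrib, ← Finset.mul_sum, Finset.sum_const,
    nsmul_eq_mul, mul_one]
  congr 2
  rw [Finset.sum_boole]
  norm_num
  congr 1
  rw [hA, Finset.filter_filter]

theorem ballot_paths_count (n : ℕ) :
    Nat.card {f : Fin (2 * n) → ℤ //
      (∀ i, f i = 1 ∨ f i = -1) ∧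
      ∀ k : ℕ, 0 ≤ ∑ i ∈ Finset.univ.filter (fun i : Fin (2 * n) => (i : ℕ) < k), f i} =
    Nat.choose (2 * n) n := by
  classical
  have key : (S' (2*n)).card = Nat.choose (2*n) n := by
    rw [S'_card, Finset.sum_congr rfl (fun j _ => S_card (2*n) j), sum_B]
  rw [← key, ← Fintype.card_coe (S' (2*n)), ← Nat.card_eq_fintype_card]
  apply Nat.card_congr
  refine ⟨fun f => ⟨fun i => decide (f.1 i = 1), ?_⟩, fun b => ⟨fun i => if b.1 i then 1 else -1, ?_⟩, ?_, ?_⟩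
  · -- forward membership
    obtain ⟨f, hf1, hf2⟩ := f
    set b : Fin (2*n) → Bool := fun i => decide (f i = 1) with hb
    have hfb : ∀ i, f i = if b i then (1:ℤ) else -1 := by
      intro i
      rcases hf1 i with h | h <;> simp [hb, h]
    simp only [S', Finset.mem_filter, Finset.mem_univ, true_and]
    intro k hk
    have := hf2 k
    rw [Finset.sum_congr rfl (fun i _ => hfb i), sum_pm] at this
    rw [card_filter_lt _ _ hk] at this
    omega
  · -- backward membership
    obtain ⟨b, hbmem⟩ := b
    dsimp only
    simp only [S', Finset.mem_filter, Finset.mem_univ, true_and] at hbmem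
    constructor
    · intro i
      by_cases hb : b i <;> simp [hb]
    · intro k
      rw [sum_pm]
      rcases le_or_gt k (2*n) with hk | hk
      · rw [card_filter_lt _ _ hk]
        have := hbmem k hk
        omega
      · rw [filter_lt_univ _ _ (by omega)]
        have h1 := hbmem (2*n) le_rfl
        have h2 : cnt b k = cnt b (2*n) := by
          unfold cnt
          congr 1
          apply Finset.filter_congr
          intro i _
          have : (i:ℕ) < 2*n := i.isLt
          constructor <;> intro h <;> exact ⟨by omega, h.2⟩
        rw [Finset.card_univ]
        rw [h2]
        simp only [Fintype.card_fin]
        omega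
  · -- left inverse
    intro f
    apply Subtype.ext
    funext i
    obtain ⟨f, hf1, hf2⟩ := f
    rcases hf1 i with h | h <;> simp [h]
  · -- right inverse
    intro b
    apply Subtype.ext
    funext i
    rcases hb : b.1 i <;> simp [hb]
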